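/- Let X be a symmetric n×n real matrix and λ > 0. If (U*, V*) with U*, V* nonnegative n×r matrices is a critical point of f(U,V) = (1/2)‖X − U Vᵀ‖_F² + (λ/2)‖U − V‖_F² subject to U ≥ 0, V ≥ 0 (i.e., there exist G, H with G ⊙ U* = 0, G ≤ 0, H ⊙ V* = 0, H ≤ 0 such that (U*V*ᵀ − X)V* + λ(U* − V*) + G = 0 and (U*V*ᵀ − X)ᵀU* − λ(U* − V*) + H = 0), and if the spectral norm satisfies ‖U*V*ᵀ‖₂ < 2λ + σ_n(X), then U* = V*. -/

import Mathlib

open Matrix BigOperators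

/-- Frobenius norm of a real matrix. -/
noncomputable def frob {n m : ℕ} (A : Matrix (Fin n) (Fin m) ℝ) : ℝ :=
  Real.sqrt (∑ i, ∑ j, (A i j)^2)

/-- Spectral (ℓ2 operator) norm of a square real matrix. -/
noncomputable def specNorm {n : ℕ} (A : Matrix (Fin n) (Fin n) ℝ) : ℝ :=
  ‖(Matrix.toEuclideanCLM (𝕜 := ℝ) A : EuclideanSpace ℝ (Fin n) →L[ℝ] EuclideanSpace ℝ (Fin n))‖

/-- Trace inner product ⟨A, B⟩ = trace(Aᵀ B). -/
noncomputable def inprod {n m : ℕ} (A B : Matrix (Fin n) (Fin m) ℝ) : ℝ :=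
  (Aᵀ * B).trace

/- ## Auxiliary lemmas -/

lemma inner_eq_sum' {n : ℕ} (x y : Fin n → ℝ) :
    (inner ℝ ((WithLp.equiv 2 (Fin n → ℝ)).symm x) ((WithLp.equiv 2 (Fin n → ℝ)).symm y) : ℝ)
      = ∑ i, x i * y i := by
  simp [PiLp.inner_apply, RCLike.inner_apply, mul_comm]

lemma col_quad_upper' {n : ℕ} (A : Matrix (Fin n) (Fin n) ℝ) (x : Fin n → ℝ) :
    ∑ i, x i * (A *ᵥ x) i ≤ specNorm A * ∑ i, x i ^ 2 := by
  set T := (Matrix.toEuclideanCLM (𝕜 := ℝ) A :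
    EuclideanSpace ℝ (Fin n) →L[ℝ] EuclideanSpace ℝ (Fin n))
  set v : EuclideanSpace ℝ (Fin n) := (WithLp.equiv 2 (Fin n → ℝ)).symm x with hv
  have hTv : T v = (WithLp.equiv 2 (Fin n → ℝ)).symm (A *ᵥ x) := by
    rw [hv]; rfl
  have h1 : (inner ℝ v (T v) : ℝ) = ∑ i, x i * (A *ᵥ x) i := by
    rw [hTv, hv, inner_eq_sum']
  have h2 : (inner ℝ v v : ℝ) = ∑ i, x i ^ 2 := by
    rw [hv, inner_eq_sum']; simp [sq]
  have h3 : (inner ℝ v (T v) : ℝ) ≤ ‖v‖ * ‖T v‖ := real_inner_le_norm v (T v)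
  have h4 : ‖T v‖ ≤ ‖T‖ * ‖v‖ := T.le_opNorm v
  have h5 : (inner ℝ v v : ℝ) = ‖v‖ ^ 2 := real_inner_self_eq_norm_sq v
  have h0 : (0:ℝ) ≤ ‖v‖ := norm_nonneg v
  have hT0 : (0:ℝ) ≤ ‖T‖ := norm_nonneg T
  calc ∑ i, x i * (A *ᵥ x) i = (inner ℝ v (T v) : ℝ) := h1.symm
    _ ≤ ‖T‖ * ‖v‖^2 := by nlinarith
    _ = specNorm A * ∑ i, x i ^ 2 := by rw [← h2, h5]; rfl

lemma col_quad_lower' {n : ℕ} [NeZero n] (X : Matrix (Fin n) (Fin n) ℝ) (hX : X.IsHermitian)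
    (x : Fin n → ℝ) :
    (⨅ i, hX.eigenvalues i) * ∑ i, x i ^ 2 ≤ ∑ i, x i * (X *ᵥ x) i := by
  set T := Matrix.toEuclideanLin (𝕜 := ℝ) X with hT
  have hsym : T.IsSymmetric := Matrix.isHermitian_iff_isSymmetric.1 hX
  set b := hX.eigenvectorBasis with hb
  set v : EuclideanSpace ℝ (Fin n) := (WithLp.equiv 2 (Fin n → ℝ)).symm x with hv
  have hTv : T v = (WithLp.equiv 2 (Fin n → ℝ)).symm (X *ᵥ x) := by
    rw [hv]; rfl
  have h1 : (inner ℝ v (T v) : ℝ) = ∑ i, x i * (X *ᵥ x) i := by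
    rw [hTv, hv, inner_eq_sum']
  have h2 : (inner ℝ v v : ℝ) = ∑ i, x i ^ 2 := by
    rw [hv, inner_eq_sum']; simp [sq]
  have hrepr : ∀ i, b.repr (T v) i = hX.eigenvalues i * b.repr v i := by
    intro i
    rw [b.repr_apply_apply, b.repr_apply_apply]
    have hTb : T (b i) = hX.eigenvalues i • b i := by
      have := hX.mulVec_eigenvectorBasis i
      apply (WithLp.equiv 2 (Fin n → ℝ)).injective
      simpa [hT, Matrix.toEuclideanLin_apply] using this
    calc (inner ℝ (b i) (T v) : ℝ) = inner ℝ (T (b i)) v := (hsym (b i) v).symm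
      _ = hX.eigenvalues i * inner ℝ (b i) v := by rw [hTb, real_inner_smul_left]
  have hiso : ∀ u w : EuclideanSpace ℝ (Fin n),
      (inner ℝ u w : ℝ) = ∑ i, b.repr u i * b.repr w i := by
    intro u w
    rw [← b.repr.inner_map_map u w, PiLp.inner_apply]
    simp [RCLike.inner_apply, mul_comm]
  have key : (inner ℝ v (T v) : ℝ) = ∑ i, hX.eigenvalues i * (b.repr v i) ^ 2 := by
    rw [hiso]
    exact Finset.sum_congr rfl fun i _ => by rw [hrepr i]; ring
  have keyv : (inner ℝ v v : ℝ) = ∑ i, (b.repr v i) ^ 2 := by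
    rw [hiso]
    exact Finset.sum_congr rfl fun i _ => (sq _).symm
  rw [← h1, ← h2, key, keyv, Finset.mul_sum]
  apply Finset.sum_le_sum
  intro i _
  have hle : (⨅ j, hX.eigenvalues j) ≤ hX.eigenvalues i :=
    ciInf_le (Finite.bddBelow_range _) i
  nlinarith [sq_nonneg (b.repr v i)]



lemma tr4_rev' {p q s t : ℕ} (A : Matrix (Fin p) (Fin q) ℝ) (B : Matrix (Fin q) (Fin s) ℝ)
    (C : Matrix (Fin s) (Fin t) ℝ) (E : Matrix (Fin t) (Fin p) ℝ) :
    (A*(B*(C*E))).trace = (Eᵀ*(Cᵀ*(Bᵀ*Aᵀ))).trace := by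
  rw [← Matrix.trace_transpose (A*(B*(C*E)))]
  simp [Matrix.transpose_mul, Matrix.mul_assoc]

lemma tr_rot1' {p q s t : ℕ} (A : Matrix (Fin p) (Fin q) ℝ) (B : Matrix (Fin q) (Fin s) ℝ)
    (C : Matrix (Fin s) (Fin t) ℝ) (E : Matrix (Fin t) (Fin p) ℝ) :
    (A*(B*(C*E))).trace = (B*(C*(E*A))).trace := by
  rw [Matrix.trace_mul_comm A (B*(C*E))]
  simp [Matrix.mul_assoc]

lemma key_identity {n r : ℕ} (U V : Matrix (Fin n) (Fin r) ℝ) :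
    2 * ((((U-V)ᵀ) * ((U*Vᵀ) * V)).trace - (((U-V)ᵀ) * ((U*Vᵀ)ᵀ * U)).trace
        + (((U-V)ᵀ) * ((U*Vᵀ) * (U-V))).trace)
      = ((((U*Vᵀ) - (U*Vᵀ)ᵀ)ᵀ) * ((U*Vᵀ) - (U*Vᵀ)ᵀ)).trace := by
  simp only [Matrix.transpose_sub, Matrix.transpose_mul, Matrix.transpose_transpose,
    Matrix.sub_mul, Matrix.mul_sub, Matrix.trace_sub, Matrix.mul_assoc]
  have E1 : (Uᵀ*(V*(Uᵀ*U))).trace = (Uᵀ*(U*(Vᵀ*U))).trace := by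
    rw [tr4_rev' Uᵀ V Uᵀ U]; simp
  have E6 : (Vᵀ*(V*(Uᵀ*U))).trace = (Uᵀ*(U*(Vᵀ*V))).trace := by
    rw [tr_rot1' Vᵀ V Uᵀ U, tr_rot1' V Uᵀ U Vᵀ]
  have E2 : (V*(Uᵀ*(U*Vᵀ))).trace = (Uᵀ*(U*(Vᵀ*V))).trace := tr_rot1' V Uᵀ U Vᵀ
  have E3 : (U*(Vᵀ*(V*Uᵀ))).trace = (Uᵀ*(U*(Vᵀ*V))).trace := by
    rw [tr_rot1' U Vᵀ V Uᵀ, E6]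
  have E5 : (U*(Vᵀ*(U*Vᵀ))).trace = (Vᵀ*(U*(Vᵀ*U))).trace := tr_rot1' U Vᵀ U Vᵀ
  have E4 : (V*(Uᵀ*(V*Uᵀ))).trace = (Vᵀ*(U*(Vᵀ*U))).trace := by
    rw [tr_rot1' V Uᵀ V Uᵀ, tr4_rev' Uᵀ V Uᵀ V]; simp
  rw [E1, E6, E2, E3, E5, E4]; ring

lemma tr_mul_sum' {n r : ℕ} (A B : Matrix (Fin n) (Fin r) ℝ) :
    (Aᵀ * B).trace = ∑ i, ∑ j, A i j * B i j := by
  rw [Matrix.trace]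
  simp only [Matrix.diag, Matrix.mul_apply, Matrix.transpose_apply]
  exact Finset.sum_comm

lemma tr_sq_nonneg' {n r : ℕ} (A : Matrix (Fin n) (Fin r) ℝ) : 0 ≤ (Aᵀ * A).trace := by
  rw [tr_mul_sum']
  exact Finset.sum_nonneg fun i _ => Finset.sum_nonneg fun j _ => mul_self_nonneg _

lemma tr_quad' {n r : ℕ} (M : Matrix (Fin n) (Fin n) ℝ) (D : Matrix (Fin n) (Fin r) ℝ) :
    (Dᵀ * (M * D)).trace = ∑ j, ∑ i, D i j * (M *ᵥ (fun k => D k j)) i := by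
  rw [Matrix.trace]
  simp only [Matrix.diag, Matrix.mul_apply, Matrix.transpose_apply, Matrix.mulVec,
    dotProduct]

lemma tr_sq_sum' {n r : ℕ} (D : Matrix (Fin n) (Fin r) ℝ) :
    (Dᵀ * D).trace = ∑ j, ∑ i, D i j ^ 2 := by
  rw [tr_mul_sum', Finset.sum_comm]
  exact Finset.sum_congr rfl fun j _ => Finset.sum_congr rfl fun i _ => (sq _).symm

lemma trace_expand1 {n r : ℕ} (D V G : Matrix (Fin n) (Fin r) ℝ)
    (A X : Matrix (Fin n) (Fin n) ℝ) (lam : ℝ)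
    (h : (A - X) * V + lam • D + G = 0) :
    (Dᵀ * (A * V)).trace - (Dᵀ * (X * V)).trace + lam * (Dᵀ * D).trace
      + (Dᵀ * G).trace = 0 := by
  have h0 : (Dᵀ * ((A - X) * V + lam • D + G)).trace = 0 := by
    rw [h, Matrix.mul_zero, Matrix.trace_zero]
  rw [Matrix.mul_add, Matrix.mul_add, Matrix.trace_add, Matrix.trace_add, Matrix.sub_mul,
    Matrix.mul_sub, Matrix.trace_sub, Matrix.mul_smul, Matrix.trace_smul, smul_eq_mul] at h0
  linarith

lemma trace_expand2 {n r : ℕ} (D U H : Matrix (Fin n) (Fin r) ℝ)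
    (B X : Matrix (Fin n) (Fin n) ℝ) (lam : ℝ)
    (h : (B - X) * U - lam • D + H = 0) :
    (Dᵀ * (B * U)).trace - (Dᵀ * (X * U)).trace - lam * (Dᵀ * D).trace
      + (Dᵀ * H).trace = 0 := by
  have h0 : (Dᵀ * ((B - X) * U - lam • D + H)).trace = 0 := by
    rw [h, Matrix.mul_zero, Matrix.trace_zero]
  rw [Matrix.mul_add, Matrix.trace_add, Matrix.mul_sub, Matrix.trace_sub, Matrix.sub_mul,
    Matrix.mul_sub, Matrix.trace_sub, Matrix.mul_smul, Matrix.trace_smul, smul_eq_mul] at h0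
  linarith

lemma trace_split3 {n r : ℕ} (D U V : Matrix (Fin n) (Fin r) ℝ)
    (X : Matrix (Fin n) (Fin n) ℝ) :
    (Dᵀ * (X * (U - V))).trace = (Dᵀ * (X * U)).trace - (Dᵀ * (X * V)).trace := by
  rw [Matrix.mul_sub, Matrix.mul_sub, Matrix.trace_sub]

lemma trG_nonneg {n r : ℕ} (U V G : Matrix (Fin n) (Fin r) ℝ)
    (hV : ∀ i j, 0 ≤ V i j) (hGU : ∀ i j, G i j * U i j = 0) (hGnp : ∀ i j, G i j ≤ 0) :
    0 ≤ ((U - V)ᵀ * G).trace := by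
  rw [tr_mul_sum']
  apply Finset.sum_nonneg; intro i _
  apply Finset.sum_nonneg; intro j _
  have h1 := hGU i j
  have h2 : (U - V) i j * G i j = -(V i j * G i j) := by
    simp only [Matrix.sub_apply]; nlinarith
  rw [h2]
  have : V i j * G i j ≤ 0 := mul_nonpos_of_nonneg_of_nonpos (hV i j) (hGnp i j)
  linarith

lemma trH_nonpos {n r : ℕ} (U V H : Matrix (Fin n) (Fin r) ℝ)
    (hU : ∀ i j, 0 ≤ U i j) (hHV : ∀ i j, H i j * V i j = 0) (hHnp : ∀ i j, H i j ≤ 0) :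
    ((U - V)ᵀ * H).trace ≤ 0 := by
  rw [tr_mul_sum']
  apply Finset.sum_nonpos; intro i _
  apply Finset.sum_nonpos; intro j _
  have h1 := hHV i j
  have h2 : (U - V) i j * H i j = U i j * H i j := by
    simp only [Matrix.sub_apply]; nlinarith
  rw [h2]
  exact mul_nonpos_of_nonneg_of_nonpos (hU i j) (hHnp i j)

lemma ad_upper {n r : ℕ} (A : Matrix (Fin n) (Fin n) ℝ) (D : Matrix (Fin n) (Fin r) ℝ) :
    (Dᵀ * (A * D)).trace ≤ specNorm A * (Dᵀ * D).trace := by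
  rw [tr_quad', tr_sq_sum', Finset.mul_sum]
  exact Finset.sum_le_sum fun j _ => col_quad_upper' A (fun k => D k j)

lemma w_lower {n r : ℕ} [NeZero n] (X : Matrix (Fin n) (Fin n) ℝ) (hX : X.IsHermitian)
    (D : Matrix (Fin n) (Fin r) ℝ) :
    (⨅ i, hX.eigenvalues i) * (Dᵀ * D).trace ≤ (Dᵀ * (X * D)).trace := by
  rw [tr_quad', tr_sq_sum', Finset.mul_sum]
  exact Finset.sum_le_sum fun j _ => col_quad_lower' X hX (fun k => D k j)

lemma D_zero_of_tr {n r : ℕ} (D : Matrix (Fin n) (Fin r) ℝ) (h : (Dᵀ * D).trace = 0) :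
    D = 0 := by
  rw [tr_sq_sum'] at h
  ext i j
  have hj := (Finset.sum_eq_zero_iff_of_nonneg
    (fun j _ => Finset.sum_nonneg fun i _ => sq_nonneg (D i j))).mp h j (Finset.mem_univ j)
  have hi := (Finset.sum_eq_zero_iff_of_nonneg
    (fun i _ => sq_nonneg (D i j))).mp hj i (Finset.mem_univ i)
  simpa using pow_eq_zero_iff (two_ne_zero) |>.mp hi

theorem critical_point_U_eq_V {n r : ℕ} [NeZero n]
    (X : Matrix (Fin n) (Fin n) ℝ) (hX : X.IsHermitian)
    (lam : ℝ) (hlam : 0 < lam)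
    (U V : Matrix (Fin n) (Fin r) ℝ)
    (hU : ∀ i j, 0 ≤ U i j) (hV : ∀ i j, 0 ≤ V i j)
    (G H : Matrix (Fin n) (Fin r) ℝ)
    (hGU : ∀ i j, G i j * U i j = 0) (hGnp : ∀ i j, G i j ≤ 0)
    (hHV : ∀ i j, H i j * V i j = 0) (hHnp : ∀ i j, H i j ≤ 0)
    (heq1 : (U * Vᵀ - X) * V + lam • (U - V) + G = 0)
    (heq2 : (U * Vᵀ - X)ᵀ * U - lam • (U - V) + H = 0)
    (hnorm : specNorm (U * Vᵀ) < 2 * lam + ⨅ i, hX.eigenvalues i) :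
    U = V := by
  have hXs : Xᵀ = X := by
    ext i j
    have := congrFun (congrFun hX i) j
    simpa using this
  have key1 := trace_expand1 (U - V) V G (U * Vᵀ) X lam heq1
  have heq2' : ((U * Vᵀ)ᵀ - X) * U - lam • (U - V) + H = 0 := by
    rw [← hXs, ← Matrix.transpose_sub]; exact heq2
  have key2 := trace_expand2 (U - V) U H ((U * Vᵀ)ᵀ) X lam heq2'
  have hwu := trace_split3 (U - V) U V X
  have hid := key_identity U V
  have hccnn := tr_sq_nonneg' ((U * Vᵀ) - (U * Vᵀ)ᵀ)
  have hcGnn := trG_nonneg U V G hV hGU hGnp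
  have hcHnp := trH_nonpos U V H hU hHV hHnp
  have hSnn : 0 ≤ ((U - V)ᵀ * (U - V)).trace := tr_sq_nonneg' (U - V)
  have hadub := ad_upper (U * Vᵀ) (U - V)
  have hwlb := w_lower X hX (U - V)
  have hS0 : ((U - V)ᵀ * (U - V)).trace = 0 := by
    by_contra hne
    have hspos : 0 < ((U - V)ᵀ * (U - V)).trace := lt_of_le_of_ne hSnn (Ne.symm hne)
    have hcoef : 0 < 2 * lam + (⨅ i, hX.eigenvalues i) - specNorm (U * Vᵀ) := by
      linarith
    nlinarith [mul_pos hcoef hspos]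
  have hD0 := D_zero_of_tr (U - V) hS0
  have : U - V = 0 := hD0
  ext i j
  have := congrFun (congrFun this i) j
  simpa [sub_eq_zero] using this
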